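/- Fix g ∈ ℕ and k ≥ 0. There is a constant C(g, k) such that the following holds. Fix positive reals w, y, z, a descending sequence of vertex subsets V(K_N) = U₀ ⊇ ⋯ ⊇ U_k with n = |U_k|, and for 4 ≤ j ≤ g a collection 𝔉_j of sets of j−2 triangles of K_N which is (y, z)-well-spread with respect to this sequence. Let π be the weight system on the set of all triangles of K_N defined by π_T = w/|U_{lev(T)}|. Fix a nonempty set 𝓠 of triangles of K_N, an integer 4 ≤ j ≤ g, and an integer f ≥ 0, and let 𝔄 be the multiset of sets of triangles containing, for each 𝓔 ∈ 𝔉_j and each partition 𝓔 = 𝓠 ∪ 𝓩 ∪ 𝓕 with |𝓕| = f and all triangles of 𝓩 contained in U_k, one copy of 𝓕. Then ψ(𝔄) ≤ C(g, k)·z·w^f·n^{j−v^j(𝓠)−f}; moreover, if |𝓠| = 1 then ψ(𝔄) ≤ C(g, k)·y·w^f·n^{j−v^j(𝓠)−f}. -/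

import Mathlib

open Finset
open scoped Classical

/-- The level of a triangle `T` with respect to the descending sequence
`U 0 ⊇ … ⊇ U k`: the largest `i ≤ k` with all vertices of `T` in `U i`. -/
def lev {N : ℕ} (U : ℕ → Finset (Fin N)) (k : ℕ) (T : Finset (Fin N)) : ℕ :=
  ((Finset.range (k + 1)).filter fun i => T ⊆ U i).sup id

/-- `v^j(𝓡)` for a nonempty set `𝓡` of at most `j - 2` triangles. -/
def vj {N : ℕ} (j : ℕ) (R : Finset (Finset (Fin N))) : ℕ :=
  if R.card = 1 ∨ R.card = j - 2 then R.card + 2 else R.card + 3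

/-- The triples of `E` are pairwise edge-disjoint. -/
def EdgeDisjointTris {N : ℕ} (E : Finset (Finset (Fin N))) : Prop :=
  ∀ t₁ ∈ E, ∀ t₂ ∈ E, t₁ ≠ t₂ → (t₁ ∩ t₂).card ≤ 1

/-- The collection `F` of sets of `j - 2` triangles of `K_N` is `(y, z)`-well-spread
with respect to the descending sequence `U 0 ⊇ … ⊇ U k` (conditions WS0–WS4). -/
def WellSpread {N : ℕ} (U : ℕ → Finset (Fin N)) (k j : ℕ) (y z : ℝ)
    (F : Finset (Finset (Finset (Fin N)))) : Prop :=
  -- WS0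
  (∀ E ∈ F, E.card = j - 2 ∧ (∀ t ∈ E, t.card = 3) ∧ EdgeDisjointTris E) ∧
  -- WS1
  (∀ R : Finset (Finset (Fin N)), R.Nonempty → (∀ t ∈ R, t.card = 3) → ∀ t' : ℕ → ℕ,
    ((F.filter fun E => R ⊆ E ∧ ∀ i < k,
        ((E \ R).filter fun T => lev U k T = i).card = t' i).card : ℝ) ≤
      z * ((U k).card : ℝ) ^
          ((j : ℤ) - (∑ i ∈ Finset.range k, (t' i : ℤ)) - (vj j R : ℤ)) *
        ∏ i ∈ Finset.range k, ((U i).card : ℝ) ^ t' i) ∧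
  -- WS2
  (∀ T T' : Finset (Fin N), T.card = 3 → T'.card = 3 → ∀ t' : ℕ → ℕ,
    (((F ×ˢ F).filter fun Ep => Ep.1 ≠ Ep.2 ∧ T ∈ Ep.1 ∧ T' ∈ Ep.2 ∧
        Ep.1 \ {T} = Ep.2 \ {T'} ∧ ∀ i < k,
        ((Ep.1 \ {T}).filter fun T'' => lev U k T'' = i).card = t' i).card : ℝ) ≤
      z * ((U k).card : ℝ) ^
          ((j : ℤ) - (∑ i ∈ Finset.range k, (t' i : ℤ)) - 4) *
        ∏ i ∈ Finset.range k, ((U i).card : ℝ) ^ t' i) ∧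
  -- WS3
  (j = 4 → ∀ T e : Finset (Fin N), T.card = 3 → e.card = 2 → ¬e ⊆ T →
    ((F.filter fun E => T ∈ E ∧ ∃ T' ∈ E, T' ≠ T ∧ lev U k T' = k ∧ e ⊆ T').card : ℝ)
      ≤ z) ∧
  -- WS4
  (∀ T : Finset (Fin N), T.card = 3 → ∀ t' : ℕ → ℕ,
    ((F.filter fun E => T ∈ E ∧ ∀ i < k,
        ((E \ {T}).filter fun T'' => lev U k T'' = i).card = t' i).card : ℝ) ≤
      y * ((U k).card : ℝ) ^
          ((j : ℤ) - (∑ i ∈ Finset.range k, (t' i : ℤ)) - 3) *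
        ∏ i ∈ Finset.range k, ((U i).card : ℝ) ^ t' i)

/-- The weight `ψ(𝔄)` of the multiset `𝔄 = 𝔄_{𝓠, j, f}^{(1)}` of configurations:
for each `𝓔 ∈ F` and each partition `𝓔 = 𝓠 ∪ 𝓩 ∪ 𝓕` with `|𝓕| = f` and all
triangles of `𝓩` inside `U k`, one copy of `𝓕` is taken, and each copy `𝓕`
contributes `∏_{T ∈ 𝓕} w / |U (lev T)|`. -/
noncomputable def psiA {N : ℕ} (U : ℕ → Finset (Fin N)) (k : ℕ) (w : ℝ)
    (F : Finset (Finset (Finset (Fin N)))) (Q : Finset (Finset (Fin N)))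
    (f : ℕ) : ℝ :=
  ((F.val.bind fun E =>
      if Q ⊆ E then
        ((E \ Q).powerset.filter fun Fs =>
          Fs.card = f ∧ ∀ t ∈ (E \ Q) \ Fs, t ⊆ U k).val
      else 0).map fun Fs => ∏ T ∈ Fs, w / ((U (lev U k T)).card : ℝ)).sum

/-- Weight bound for well-spread collections (general moments, part 1): for a
`(y, z)`-well-spread collection `F` of sets of `j - 2` triangles with respect to
`U 0 ⊇ ⋯ ⊇ U k`, with the weight system `π_T = w / |U (lev T)|`, the weight of the
multiset `𝔄_{𝓠, j, f}^{(1)}` satisfies `ψ(𝔄) ≤ C(g,k) · z · w^f · n^{j - v^j(𝓠) - f}`,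
and moreover `ψ(𝔄) ≤ C(g,k) · y · w^f · n^{j - v^j(𝓠) - f}` when `|𝓠| = 1`. -/
private lemma lev_le {N : ℕ} (U : ℕ → Finset (Fin N)) (k : ℕ) (T : Finset (Fin N)) :
    lev U k T ≤ k := by
  apply Finset.sup_le
  intro b hb
  have := Finset.mem_range.mp (Finset.mem_filter.mp hb).1
  simpa using Nat.lt_succ_iff.mp this

private lemma lev_eq_k {N : ℕ} (U : ℕ → Finset (Fin N)) (k : ℕ) (T : Finset (Fin N))
    (h : T ⊆ U k) : lev U k T = k := by
  refine le_antisymm (lev_le U k T) ?_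
  have hk : k ∈ (Finset.range (k + 1)).filter fun i => T ⊆ U i :=
    Finset.mem_filter.mpr ⟨Finset.mem_range.mpr (Nat.lt_succ_self k), h⟩
  exact Finset.le_sup (f := id) hk

private lemma zpow_mul_zpow_le {x : ℝ} (hx : 0 ≤ x) (a b : ℤ) :
    x ^ a * x ^ b ≤ x ^ (a + b) := by
  rcases eq_or_ne x 0 with rfl | h
  · rcases eq_or_ne a 0 with rfl | ha
    · simp
    · rw [zero_zpow a ha, zero_mul]
      exact zpow_nonneg le_rfl _
  · rw [zpow_add₀ h]

private lemma key_bound {N : ℕ} (U : ℕ → Finset (Fin N)) (k g j : ℕ) (hjg : j ≤ g)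
    (w c : ℝ) (hw : 0 ≤ w) (hc : 0 ≤ c)
    (F : Finset (Finset (Finset (Fin N))))
    (hF : ∀ E ∈ F, E.card = j - 2)
    (Q : Finset (Finset (Fin N))) (v : ℕ)
    (hcount : ∀ t' : ℕ → ℕ,
      ((F.filter fun E => Q ⊆ E ∧ ∀ i < k,
          ((E \ Q).filter fun T => lev U k T = i).card = t' i).card : ℝ) ≤
        c * ((U k).card : ℝ) ^ ((j : ℤ) - (∑ i ∈ Finset.range k, (t' i : ℤ)) - (v : ℤ)) *
          ∏ i ∈ Finset.range k, ((U i).card : ℝ) ^ t' i)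
    (f : ℕ) :
    psiA U k w F Q f ≤ ((2 : ℝ) ^ g * (g + 1) ^ (k + 1)) * c * w ^ f *
      ((U k).card : ℝ) ^ ((j : ℤ) - (v : ℤ) - (f : ℤ)) := by
  classical
  set n : ℝ := ((U k).card : ℝ) with hn
  have hn0 : 0 ≤ n := by positivity
  set wt : Finset (Finset (Fin N)) → ℝ :=
    fun Fs => ∏ T ∈ Fs, w / ((U (lev U k T)).card : ℝ) with hwt
  set D : Finset (Finset (Fin N)) → Finset (Finset (Finset (Fin N))) := fun E =>
    (E \ Q).powerset.filter fun Fs =>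
      Fs.card = f ∧ ∀ t ∈ (E \ Q) \ Fs, t ⊆ U k with hD
  set prof : Finset (Finset (Fin N)) → ℕ → ℕ := fun E i =>
    ((E \ Q).filter fun T => lev U k T = i).card with hprof
  set W : (ℕ → ℕ) → ℝ := fun p =>
    w ^ f * (∏ i ∈ Finset.range k, ((U i).card : ℝ) ^ (-(p i : ℤ))) *
      n ^ ((∑ i ∈ Finset.range k, (p i : ℤ)) - (f : ℤ)) with hW
  have hWnn : ∀ p, 0 ≤ W p := by
    intro p
    refine mul_nonneg (mul_nonneg (by positivity) ?_) (zpow_nonneg hn0 _)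
    exact Finset.prod_nonneg fun i _ => zpow_nonneg (by positivity) _
  -- Step 1: rewrite psiA as a double Finset sum
  have hpsi : psiA U k w F Q f = ∑ E ∈ F, if Q ⊆ E then ∑ Fs ∈ D E, wt Fs else 0 := by
    rw [psiA, Multiset.map_bind, Multiset.sum_bind]
    refine Finset.sum_congr rfl fun E _ => ?_
    split_ifs with h
    · rfl
    · simp
  rw [hpsi, ← Finset.sum_filter]
  set F' : Finset (Finset (Finset (Fin N))) := F.filter fun E => Q ⊆ E with hF'
  -- Step 2: per-E bound
  have hperE : ∀ E ∈ F', (∑ Fs ∈ D E, wt Fs) ≤ (2 : ℝ) ^ g * W (prof E) := by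
    intro E hE
    obtain ⟨hEF, hQE⟩ := Finset.mem_filter.mp hE
    have hwteq : ∀ Fs ∈ D E, wt Fs = W (prof E) := by
      intro Fs hFs
      have hFs' := Finset.mem_filter.mp hFs
      have hsub : Fs ⊆ E \ Q := Finset.mem_powerset.mp hFs'.1
      obtain ⟨hcard, hZ⟩ := hFs'.2
      set ci : ℕ → ℕ := fun i => (Fs.filter fun T => lev U k T = i).card with hci
      have hmaps : ∀ T ∈ Fs, lev U k T ∈ Finset.range (k + 1) := fun T _ =>
        Finset.mem_range.mpr (Nat.lt_succ_of_le (lev_le U k T))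
      have h1 : wt Fs = ∏ i ∈ Finset.range (k + 1),
          ∏ T ∈ Fs.filter (fun T => lev U k T = i), (w / ((U (lev U k T)).card : ℝ)) :=
        (Finset.prod_fiberwise_of_maps_to hmaps _).symm
      have h2 : ∀ i, ∏ T ∈ Fs.filter (fun T => lev U k T = i),
          (w / ((U (lev U k T)).card : ℝ)) = w ^ ci i * ((U i).card : ℝ) ^ (-(ci i : ℤ)) := by
        intro i
        have he : ∏ T ∈ Fs.filter (fun T => lev U k T = i), (w / ((U (lev U k T)).card : ℝ))
            = ∏ _T ∈ Fs.filter (fun T => lev U k T = i), (w / ((U i).card : ℝ)) :=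
          Finset.prod_congr rfl fun T hT => by rw [(Finset.mem_filter.mp hT).2]
        rw [he, Finset.prod_const, div_pow, div_eq_mul_inv, ← zpow_natCast ((U i).card : ℝ),
          ← zpow_neg]
      have hcs : f = ∑ i ∈ Finset.range (k + 1), ci i := by
        rw [← hcard]; exact Finset.card_eq_sum_card_fiberwise hmaps
      have h3 : wt Fs = w ^ f * ∏ i ∈ Finset.range (k + 1), ((U i).card : ℝ) ^ (-(ci i : ℤ)) := by
        rw [h1, Finset.prod_congr rfl fun i _ => h2 i, Finset.prod_mul_distrib,
          Finset.prod_pow_eq_pow_sum, ← hcs]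
      -- identify ci with prof on range k
      have hfib : ∀ i < k, ci i = prof E i := by
        intro i hik
        have : Fs.filter (fun T => lev U k T = i) = (E \ Q).filter (fun T => lev U k T = i) := by
          apply Finset.Subset.antisymm (Finset.filter_subset_filter _ hsub)
          intro T hT
          obtain ⟨hTE, hlev⟩ := Finset.mem_filter.mp hT
          refine Finset.mem_filter.mpr ⟨?_, hlev⟩
          by_contra hTF
          have hTk : T ⊆ U k := hZ T (Finset.mem_sdiff.mpr ⟨hTE, hTF⟩)
          have := lev_eq_k U k T hTk
          omega
        simp only [hci, hprof, this]
      have hck : (ci k : ℤ) = (f : ℤ) - ∑ i ∈ Finset.range k, (prof E i : ℤ) := by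
        have := hcs
        rw [Finset.sum_range_succ] at this
        have hs : ∑ i ∈ Finset.range k, ci i = ∑ i ∈ Finset.range k, prof E i :=
          Finset.sum_congr rfl fun i hi => hfib i (Finset.mem_range.mp hi)
        rw [hs] at this
        push_cast [this]
        ring
      rw [h3, Finset.prod_range_succ]
      have hrest : ∏ i ∈ Finset.range k, ((U i).card : ℝ) ^ (-(ci i : ℤ)) =
          ∏ i ∈ Finset.range k, ((U i).card : ℝ) ^ (-(prof E i : ℤ)) :=
        Finset.prod_congr rfl fun i hi => by rw [hfib i (Finset.mem_range.mp hi)]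
      rw [hrest]
      have hlast : ((U k).card : ℝ) ^ (-(ci k : ℤ)) =
          n ^ ((∑ i ∈ Finset.range k, (prof E i : ℤ)) - (f : ℤ)) := by
        rw [hn, hck]; ring_nf
      rw [hlast, hW]; ring
    calc ∑ Fs ∈ D E, wt Fs = ∑ _Fs ∈ D E, W (prof E) := Finset.sum_congr rfl hwteq
      _ = (D E).card • W (prof E) := Finset.sum_const _
      _ ≤ (2 : ℝ) ^ g * W (prof E) := by
          rw [nsmul_eq_mul]
          refine mul_le_mul_of_nonneg_right ?_ (hWnn _)
          have h1 : (D E).card ≤ 2 ^ g := by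
            calc (D E).card ≤ (E \ Q).powerset.card :=
                  Finset.card_le_card (Finset.filter_subset _ _)
              _ = 2 ^ (E \ Q).card := Finset.card_powerset _
              _ ≤ 2 ^ g := by
                  apply Nat.pow_le_pow_right (by norm_num)
                  calc (E \ Q).card ≤ E.card := Finset.card_le_card Finset.sdiff_subset
                    _ = j - 2 := hF E hEF
                    _ ≤ g := by omega
          exact_mod_cast h1
  -- Step 3: sum the per-E bounds
  have step3 : ∑ E ∈ F', ∑ Fs ∈ D E, wt Fs ≤ (2 : ℝ) ^ g * ∑ E ∈ F', W (prof E) := by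
    rw [Finset.mul_sum]
    exact Finset.sum_le_sum hperE
  -- Step 4: fiber over profiles
  have main2 : ∑ E ∈ F', W (prof E) ≤
      ((g : ℝ) + 1) ^ (k + 1) * (c * w ^ f * n ^ ((j : ℤ) - (v : ℤ) - (f : ℤ))) := by
    set P : Finset (ℕ → ℕ) := F'.image prof with hPdef
    have hfiber : ∑ E ∈ F', W (prof E) =
        ∑ p ∈ P, ∑ E ∈ F'.filter (fun E => prof E = p), W (prof E) :=
      (Finset.sum_fiberwise_of_maps_to (fun E hE => Finset.mem_image_of_mem prof hE) _).symm
    have hM : 0 ≤ c * w ^ f * n ^ ((j : ℤ) - (v : ℤ) - (f : ℤ)) := by positivity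
    have hperp : ∀ p ∈ P, ∑ E ∈ F'.filter (fun E => prof E = p), W (prof E) ≤
        c * w ^ f * n ^ ((j : ℤ) - (v : ℤ) - (f : ℤ)) := by
      intro p hp
      have h1 : ∑ E ∈ F'.filter (fun E => prof E = p), W (prof E) =
          ((F'.filter (fun E => prof E = p)).card : ℝ) * W p := by
        rw [← nsmul_eq_mul, ← Finset.sum_const]
        exact Finset.sum_congr rfl fun E hE => by rw [(Finset.mem_filter.mp hE).2]
      rw [h1]
      have hsubset : F'.filter (fun E => prof E = p) ⊆ F.filter (fun E => Q ⊆ E ∧ ∀ i < k,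
          ((E \ Q).filter fun T => lev U k T = i).card = p i) := by
        intro E hE
        obtain ⟨hE', hpe⟩ := Finset.mem_filter.mp hE
        rw [hF'] at hE'
        obtain ⟨hEF, hQE⟩ := Finset.mem_filter.mp hE'
        refine Finset.mem_filter.mpr ⟨hEF, hQE, fun i _ => ?_⟩
        simpa [hprof] using congrFun hpe i
      have hcard : ((F'.filter (fun E => prof E = p)).card : ℝ) ≤
          c * n ^ ((j : ℤ) - (∑ i ∈ Finset.range k, (p i : ℤ)) - (v : ℤ)) *
            ∏ i ∈ Finset.range k, ((U i).card : ℝ) ^ p i := by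
        refine le_trans ?_ (hcount p)
        exact_mod_cast Nat.cast_le.mpr (Finset.card_le_card hsubset)
      have hP12 : (∏ i ∈ Finset.range k, ((U i).card : ℝ) ^ p i) *
          (∏ i ∈ Finset.range k, ((U i).card : ℝ) ^ (-(p i : ℤ))) ≤ 1 := by
        rw [← Finset.prod_mul_distrib]
        refine Finset.prod_le_one
          (fun i _ => mul_nonneg (by positivity) (zpow_nonneg (by positivity) _))
          (fun i _ => ?_)
        calc ((U i).card : ℝ) ^ p i * ((U i).card : ℝ) ^ (-(p i : ℤ))
            = ((U i).card : ℝ) ^ (p i : ℤ) * ((U i).card : ℝ) ^ (-(p i : ℤ)) := by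
              rw [zpow_natCast]
          _ ≤ ((U i).card : ℝ) ^ ((p i : ℤ) + -(p i : ℤ)) :=
              zpow_mul_zpow_le (by positivity) _ _
          _ = 1 := by simp
      have hP12nn : 0 ≤ (∏ i ∈ Finset.range k, ((U i).card : ℝ) ^ p i) *
          (∏ i ∈ Finset.range k, ((U i).card : ℝ) ^ (-(p i : ℤ))) :=
        mul_nonneg (Finset.prod_nonneg fun i _ => by positivity)
          (Finset.prod_nonneg fun i _ => zpow_nonneg (by positivity) _)
      have hNN : n ^ ((j : ℤ) - (∑ i ∈ Finset.range k, (p i : ℤ)) - (v : ℤ)) *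
          n ^ ((∑ i ∈ Finset.range k, (p i : ℤ)) - (f : ℤ)) ≤
          n ^ ((j : ℤ) - (v : ℤ) - (f : ℤ)) := by
        have h := zpow_mul_zpow_le hn0
          ((j : ℤ) - (∑ i ∈ Finset.range k, (p i : ℤ)) - (v : ℤ))
          ((∑ i ∈ Finset.range k, (p i : ℤ)) - (f : ℤ))
        rwa [show ((j : ℤ) - (∑ i ∈ Finset.range k, (p i : ℤ)) - (v : ℤ)) +
            ((∑ i ∈ Finset.range k, (p i : ℤ)) - (f : ℤ)) = (j : ℤ) - (v : ℤ) - (f : ℤ)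
          by ring] at h
      calc ((F'.filter (fun E => prof E = p)).card : ℝ) * W p
          ≤ (c * n ^ ((j : ℤ) - (∑ i ∈ Finset.range k, (p i : ℤ)) - (v : ℤ)) *
              ∏ i ∈ Finset.range k, ((U i).card : ℝ) ^ p i) * W p :=
            mul_le_mul_of_nonneg_right hcard (hWnn p)
        _ = (c * w ^ f) *
            ((n ^ ((j : ℤ) - (∑ i ∈ Finset.range k, (p i : ℤ)) - (v : ℤ)) *
              n ^ ((∑ i ∈ Finset.range k, (p i : ℤ)) - (f : ℤ))) *
             ((∏ i ∈ Finset.range k, ((U i).card : ℝ) ^ p i) *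
              (∏ i ∈ Finset.range k, ((U i).card : ℝ) ^ (-(p i : ℤ))))) := by
            simp only [hW]; ring
        _ ≤ (c * w ^ f) * (n ^ ((j : ℤ) - (v : ℤ) - (f : ℤ)) * 1) := by
            refine mul_le_mul_of_nonneg_left ?_ (by positivity)
            exact mul_le_mul hNN hP12 hP12nn (zpow_nonneg hn0 _)
        _ = c * w ^ f * n ^ ((j : ℤ) - (v : ℤ) - (f : ℤ)) := by ring
    -- card of the set of profiles
    have himg : P.card ≤ (g + 1) ^ (k + 1) := by
      have hbound : ∀ p ∈ P, (∀ i, p i ≤ g) ∧ ∀ i, k < i → p i = 0 := by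
        intro p hp
        obtain ⟨E, hE, rfl⟩ := Finset.mem_image.mp hp
        rw [hF'] at hE
        obtain ⟨hEF, hQE⟩ := Finset.mem_filter.mp hE
        constructor
        · intro i
          calc prof E i ≤ (E \ Q).card := Finset.card_le_card (Finset.filter_subset _ _)
            _ ≤ E.card := Finset.card_le_card Finset.sdiff_subset
            _ = j - 2 := hF E hEF
            _ ≤ g := by omega
        · intro i hi
          have hemp : (E \ Q).filter (fun T => lev U k T = i) = ∅ := by
            refine Finset.filter_eq_empty_iff.mpr fun T _ => ?_
            have := lev_le U k T; omega
          simp only [hprof, hemp, Finset.card_empty]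
      have hinj : Set.InjOn (fun (p : ℕ → ℕ) (i : Fin (k + 1)) =>
          (⟨min (p i) g, Nat.lt_succ_of_le (min_le_right _ _)⟩ : Fin (g + 1))) ↑P := by
        intro p hp q hq hpq
        obtain ⟨hpg, hp0⟩ := hbound p hp
        obtain ⟨hqg, hq0⟩ := hbound q hq
        funext i
        rcases Nat.lt_or_ge i (k + 1) with hik | hik
        · have h2 := congrArg Fin.val (congrFun hpq ⟨i, hik⟩)
          simp only at h2
          rwa [min_eq_left (hpg i), min_eq_left (hqg i)] at h2
        · rw [hp0 i (by omega), hq0 i (by omega)]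
      calc P.card ≤ (Finset.univ : Finset (Fin (k + 1) → Fin (g + 1))).card :=
          Finset.card_le_card_of_injOn _ (fun p _ => Finset.mem_univ _) hinj
        _ = (g + 1) ^ (k + 1) := by
            rw [Finset.card_univ, Fintype.card_fun, Fintype.card_fin, Fintype.card_fin]
    calc ∑ E ∈ F', W (prof E) = ∑ p ∈ P, ∑ E ∈ F'.filter (fun E => prof E = p), W (prof E) :=
        hfiber
      _ ≤ P.card • (c * w ^ f * n ^ ((j : ℤ) - (v : ℤ) - (f : ℤ))) :=
          Finset.sum_le_card_nsmul _ _ _ hperp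
      _ ≤ ((g : ℝ) + 1) ^ (k + 1) * (c * w ^ f * n ^ ((j : ℤ) - (v : ℤ) - (f : ℤ))) := by
          rw [nsmul_eq_mul]
          refine mul_le_mul_of_nonneg_right ?_ hM
          calc (P.card : ℝ) ≤ (((g + 1) ^ (k + 1) : ℕ) : ℝ) := by exact_mod_cast himg
            _ = ((g : ℝ) + 1) ^ (k + 1) := by push_cast; ring
  calc ∑ E ∈ F', ∑ Fs ∈ D E, wt Fs ≤ (2 : ℝ) ^ g * ∑ E ∈ F', W (prof E) := step3
    _ ≤ (2 : ℝ) ^ g *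
        (((g : ℝ) + 1) ^ (k + 1) * (c * w ^ f * n ^ ((j : ℤ) - (v : ℤ) - (f : ℤ)))) :=
        mul_le_mul_of_nonneg_left main2 (by positivity)
    _ = ((2 : ℝ) ^ g * ((g : ℝ) + 1) ^ (k + 1)) * c * w ^ f *
        n ^ ((j : ℤ) - (v : ℤ) - (f : ℤ)) := by ring



theorem wellspread_weight_bound (g k : ℕ) :
    ∃ Cgk : ℝ, 0 < Cgk ∧
    ∀ (N : ℕ) (U : ℕ → Finset (Fin N)),
      U 0 = Finset.univ → (∀ i < k, U (i + 1) ⊆ U i) →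
    ∀ w y z : ℝ, 0 < w → 0 < y → 0 < z →
    ∀ j : ℕ, 4 ≤ j → j ≤ g →
    ∀ F : Finset (Finset (Finset (Fin N))), WellSpread U k j y z F →
    ∀ Q : Finset (Finset (Fin N)), Q.Nonempty → (∀ t ∈ Q, t.card = 3) →
    ∀ f : ℕ,
      psiA U k w F Q f ≤
        Cgk * z * w ^ f *
          ((U k).card : ℝ) ^ ((j : ℤ) - (vj j Q : ℤ) - (f : ℤ)) ∧
      (Q.card = 1 →
        psiA U k w F Q f ≤
          Cgk * y * w ^ f *
            ((U k).card : ℝ) ^ ((j : ℤ) - (vj j Q : ℤ) - (f : ℤ))) := by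

  refine ⟨(2 : ℝ) ^ g * ((g : ℝ) + 1) ^ (k + 1), by positivity, ?_⟩
  intro N U hU0 hUdesc w y z hw hy hz j hj4 hjg F hWS Q hQne hQ3 f
  obtain ⟨hWS0, hWS1, _hWS2, _hWS3, hWS4⟩ := hWS
  have hF : ∀ E ∈ F, E.card = j - 2 := fun E hE => (hWS0 E hE).1
  constructor
  · exact key_bound U k g j hjg w z hw.le hz.le F hF Q (vj j Q) (hWS1 Q hQne hQ3) f
  · intro hQ1
    obtain ⟨T, rfl⟩ := Finset.card_eq_one.mp hQ1
    have hT3 : T.card = 3 := hQ3 T (Finset.mem_singleton_self T)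
    have hv : vj j ({T} : Finset (Finset (Fin N))) = 3 := by
      simp [vj]
    rw [hv]
    have hcount : ∀ t' : ℕ → ℕ,
        ((F.filter fun E => ({T} : Finset (Finset (Fin N))) ⊆ E ∧ ∀ i < k,
            ((E \ {T}).filter fun T'' => lev U k T'' = i).card = t' i).card : ℝ) ≤
          y * ((U k).card : ℝ) ^
              ((j : ℤ) - (∑ i ∈ Finset.range k, (t' i : ℤ)) - ((3 : ℕ) : ℤ)) *
            ∏ i ∈ Finset.range k, ((U i).card : ℝ) ^ t' i := by
      intro t'
      have h := hWS4 T hT3 t'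
      have hset : (F.filter fun E => ({T} : Finset (Finset (Fin N))) ⊆ E ∧ ∀ i < k,
          ((E \ {T}).filter fun T'' => lev U k T'' = i).card = t' i) =
          (F.filter fun E => T ∈ E ∧ ∀ i < k,
          ((E \ {T}).filter fun T'' => lev U k T'' = i).card = t' i) := by
        refine Finset.filter_congr fun E _ => ?_
        rw [Finset.singleton_subset_iff]
      rw [hset]
      convert h using 3
      norm_num
    exact key_bound U k g j hjg w y hw.le hy.le F hF {T} 3 hcount f
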